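/- Fix t ≥ 2 and ℓ ≥ 1. Let A_1, ..., A_t ⊆ [ℓ] be sets whose pairwise intersections all equal {y} for a common element y ∈ [ℓ] (uniquely intersecting). Consider items with timestamp (j-1)t + i and value (ℓ-j)t + i for each i ∈ [t], j ∈ A_i, and let V be the value sequence sorted by increasing timestamp. Then lis(V) = t. -/

import Mathlib

/-- A sequence is non-decreasing on an index set `S`. -/
def MonoOn {n : ℕ} {α : Type*} [Preorder α] (σ : Fin n → α) (S : Finset (Fin n)) : Prop :=
  ∀ i ∈ S, ∀ j ∈ S, i ≤ j → σ i ≤ σ j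

/-- Length of the longest non-decreasing subsequence. -/
noncomputable def lisLen {n : ℕ} {α : Type*} [Preorder α] (σ : Fin n → α) : ℕ :=
  sSup {k | ∃ S : Finset (Fin n), S.card = k ∧ MonoOn σ S}

/-- Edit distance to monotonicity: minimum number of deletions leaving a
non-decreasing subsequence. -/
noncomputable def edDist {n : ℕ} {α : Type*} [Preorder α] (σ : Fin n → α) : ℕ :=
  sInf {k | ∃ S : Finset (Fin n), S.card = k ∧ MonoOn σ Sᶜ}

/-- Timestamp of the item contributed by player `i` (0-indexed) for element
`j` (0-indexed) : `(j-1)t + i` with 1-indexed `i,j`, i.e. `j₀·t + i₀ + 1`. -/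
def tsDisj (t ℓ : ℕ) (p : Fin t × Fin ℓ) : ℕ := (p.2 : ℕ) * t + (p.1 : ℕ) + 1

/-- Value of that item: `(ℓ-j)t + i` with 1-indexed `i,j`. -/
def valDisj (t ℓ : ℕ) (p : Fin t × Fin ℓ) : ℕ := (ℓ - 1 - (p.2 : ℕ)) * t + (p.1 : ℕ) + 1


private lemma base_le {t a b i i' : ℕ} (hi' : i' < t) (h : a * t + i ≤ b * t + i') :
    a ≤ b := by
  by_contra h'
  push_neg at h'
  have h2 : (b + 1) * t ≤ a * t := Nat.mul_le_mul_right t h'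
  have h3 : (b + 1) * t = b * t + t := by ring
  omega

theorem disj_intersecting_lis_t (t ℓ : ℕ) (ht : 2 ≤ t) (hℓ : 1 ≤ ℓ)
    (A : Fin t → Finset (Fin ℓ)) (y : Fin ℓ)
    (hy : ∀ i : Fin t, y ∈ A i)
    (hint : ∀ i₁ i₂ : Fin t, i₁ ≠ i₂ → A i₁ ∩ A i₂ = {y})
    (S : Finset (Fin t × Fin ℓ))
    (hS : S = Finset.univ.filter (fun p : Fin t × Fin ℓ => p.2 ∈ A p.1))
    (f : Fin S.card → Fin t × Fin ℓ)
    (hf : ∀ k, f k ∈ S) (hinj : Function.Injective f)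
    (hmono : StrictMono (fun k => tsDisj t ℓ (f k))) :
    lisLen (fun k => valDisj t ℓ (f k)) = t := by
  classical
  have hginj : Function.Injective (fun k : Fin S.card => (⟨f k, hf k⟩ : {x // x ∈ S})) :=
    fun a b h => hinj (congrArg Subtype.val h)
  have hgbij : Function.Bijective (fun k : Fin S.card => (⟨f k, hf k⟩ : {x // x ∈ S})) :=
    (Fintype.bijective_iff_injective_and_card _).mpr ⟨hginj, by simp⟩
  set e := Equiv.ofBijective _ hgbij with he
  have hmem : ∀ i : Fin t, (i, y) ∈ S := by intro i; rw [hS]; simp [hy i]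
  set kf : Fin t → Fin S.card := fun i => e.symm ⟨(i, y), hmem i⟩ with hkf
  have hfk : ∀ i, f (kf i) = (i, y) := by
    intro i
    have h := e.apply_symm_apply ⟨(i, y), hmem i⟩
    exact congrArg Subtype.val h
  have hkinj : Function.Injective kf := by
    intro a b h
    have h2 := congrArg f h
    rw [hfk, hfk] at h2
    exact (Prod.mk.injEq _ _ _ _ ▸ h2).1
  have htmem : t ∈ {m | ∃ T : Finset (Fin S.card), T.card = m ∧
      MonoOn (fun k => valDisj t ℓ (f k)) T} := by
    refine ⟨Finset.image kf Finset.univ, ?_, ?_⟩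
    · rw [Finset.card_image_of_injective _ hkinj, Finset.card_univ, Fintype.card_fin]
    · intro a ha b hb hab
      simp only [Finset.mem_image] at ha hb
      obtain ⟨i, _, rfl⟩ := ha
      obtain ⟨i', _, rfl⟩ := hb
      have hts := hmono.monotone hab
      simp only [tsDisj, hfk] at hts
      simp only [valDisj, hfk]
      omega
  have hub : ∀ m ∈ {m | ∃ T : Finset (Fin S.card), T.card = m ∧
      MonoOn (fun k => valDisj t ℓ (f k)) T}, m ≤ t := by
    rintro m ⟨T, rfl, hT⟩
    have key : ∀ a ∈ T, ∀ b ∈ T, a < b → (f a).2 = (f b).2 := by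
      intro a ha b hb hab
      have hts := hmono hab
      have hval := hT a ha b hb hab.le
      simp only [tsDisj, valDisj] at hts hval
      have hia := (f a).1.isLt
      have hib := (f b).1.isLt
      have hts' : ((f a).2 : ℕ) * t + (f a).1 ≤ ((f b).2 : ℕ) * t + (f b).1 := by omega
      have hval' : (ℓ - 1 - ((f a).2 : ℕ)) * t + (f a).1 ≤
          (ℓ - 1 - ((f b).2 : ℕ)) * t + (f b).1 := by omega
      have h1 : ((f a).2 : ℕ) ≤ (f b).2 := base_le hib hts'
      have h2 : ℓ - 1 - ((f a).2 : ℕ) ≤ ℓ - 1 - ((f b).2 : ℕ) := base_le hib hval'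
      have hja := (f a).2.isLt
      have hjb := (f b).2.isLt
      exact Fin.ext (by omega)
    calc T.card ≤ Fintype.card (Fin t) := by
          apply Finset.card_le_card_of_injOn (fun x => (f x).1)
            (fun _ _ => Finset.mem_univ _)
          intro a ha b hb hab
          by_contra hne
          rcases Ne.lt_or_gt hne with h | h
          · exact hne (hinj (Prod.ext hab (key a ha b hb h)))
          · exact hne (hinj (Prod.ext hab.symm (key b hb a ha h))).symm
      _ = t := Fintype.card_fin t
  have hne2 : Set.Nonempty {m | ∃ T : Finset (Fin S.card), T.card = m ∧
      MonoOn (fun k => valDisj t ℓ (f k)) T} := ⟨t, htmem⟩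
  have hbdd : BddAbove {m | ∃ T : Finset (Fin S.card), T.card = m ∧
      MonoOn (fun k => valDisj t ℓ (f k)) T} := ⟨t, fun m hm => hub m hm⟩
  exact le_antisymm (csSup_le hne2 hub) (le_csSup hbdd htmem)
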